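/- Every Lie subalgebra of so(4) that is not equal to so(4) itself has dimension at most 4. -/

import Mathlib

open Matrix

attribute [local instance 100] LieRing.ofAssociativeRing

/-- The Lie algebra `so(4)` of `4×4` real skew-symmetric matrices
(`Aᵀ + A = 0`, i.e. skew-adjoint with respect to the identity matrix). -/
def so4 : LieSubalgebra ℝ (Matrix (Fin 4) (Fin 4) ℝ) :=
  skewAdjointMatricesLieSubalgebra (1 : Matrix (Fin 4) (Fin 4) ℝ)

lemma mem_so4 {A : Matrix (Fin 4) (Fin 4) ℝ} : A ∈ so4 ↔ Aᵀ = -A := by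
  rw [so4, mem_skewAdjointMatricesLieSubalgebra, mem_skewAdjointMatricesSubmodule,
    Matrix.IsSkewAdjoint, Matrix.IsAdjointPair, Matrix.mul_one, Matrix.one_mul]

lemma so4_skew {A : Matrix (Fin 4) (Fin 4) ℝ} (h : A ∈ so4) : ∀ i j, A j i = - A i j := by
  intro i j
  have := congrFun (congrFun (mem_so4.mp h) i) j
  simpa [Matrix.transpose_apply] using this

def idx : Fin 6 → Fin 4 × Fin 4 := ![(0,1),(0,2),(0,3),(1,2),(1,3),(2,3)]

def bm : Fin 6 → Matrix (Fin 4) (Fin 4) ℝ :=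
![!![0,1,0,0; -1,0,0,0; 0,0,0,0; 0,0,0,0],
  !![0,0,1,0; 0,0,0,0; -1,0,0,0; 0,0,0,0],
  !![0,0,0,1; 0,0,0,0; 0,0,0,0; -1,0,0,0],
  !![0,0,0,0; 0,0,1,0; 0,-1,0,0; 0,0,0,0],
  !![0,0,0,0; 0,0,0,1; 0,0,0,0; 0,-1,0,0],
  !![0,0,0,0; 0,0,0,0; 0,0,0,1; 0,0,-1,0]]

section vecsimp
variable {α : Type*}
lemma v6_0 (a b c d e f : α) : ![a,b,c,d,e,f] 0 = a := rfl
lemma v6_1 (a b c d e f : α) : ![a,b,c,d,e,f] 1 = b := rfl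
lemma v6_2 (a b c d e f : α) : ![a,b,c,d,e,f] 2 = c := rfl
lemma v6_3 (a b c d e f : α) : ![a,b,c,d,e,f] 3 = d := rfl
lemma v6_4 (a b c d e f : α) : ![a,b,c,d,e,f] 4 = e := rfl
lemma v6_5 (a b c d e f : α) : ![a,b,c,d,e,f] 5 = f := rfl
lemma z1 : Matrix.vecHead (Matrix.vecTail (fun _ : Fin 4 => (0:ℝ))) = 0 := rfl
lemma z2 : Matrix.vecHead (Matrix.vecTail (Matrix.vecTail (fun _ : Fin 4 => (0:ℝ)))) = 0 := rfl
lemma z3 : Matrix.vecHead (Matrix.vecTail (fun _ : Fin 3 => (0:ℝ))) = 0 := rfl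
lemma z4 : Matrix.vecHead (fun _ : Fin 4 => (0:ℝ)) = 0 := rfl
lemma z5 : Matrix.vecHead (fun _ : Fin 3 => (0:ℝ)) = 0 := rfl
lemma z6 : Matrix.vecHead (fun _ : Fin 2 => (0:ℝ)) = 0 := rfl
end vecsimp

lemma bm_mem (k : Fin 6) : bm k ∈ so4 := by
  rw [mem_so4]
  fin_cases k <;> (ext i j; fin_cases i <;> fin_cases j <;>
    norm_num [bm, v6_0, v6_1, v6_2, v6_3, v6_4, v6_5])

noncomputable def toE : so4 →ₗ[ℝ] EuclideanSpace ℝ (Fin 6) where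
  toFun A := WithLp.toLp 2 (fun k => (A : Matrix (Fin 4) (Fin 4) ℝ) (idx k).1 (idx k).2)
  map_add' A B := by ext k; simp
  map_smul' c A := by ext k; simp [SetLike.val_smul]

noncomputable def ofE : EuclideanSpace ℝ (Fin 6) →ₗ[ℝ] so4 where
  toFun f := ⟨∑ k, f k • bm k, Submodule.sum_mem _ (fun k _ => Submodule.smul_mem _ _ (bm_mem k))⟩
  map_add' f g := by
    apply Subtype.ext
    show ∑ k, _ • bm k = (⟨_, _⟩ : so4).1 + (⟨_, _⟩ : so4).1
    simp [add_smul, Finset.sum_add_distrib]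
  map_smul' c f := by
    apply Subtype.ext
    show ∑ k, _ • bm k = c • ((⟨_, _⟩ : so4).1 : Matrix (Fin 4) (Fin 4) ℝ)
    simp [Finset.smul_sum, smul_smul]

lemma ofE_toE (A : so4) : ofE (toE A) = A := by
  apply Subtype.ext
  have h := so4_skew A.2
  have hd : ∀ i, (A : Matrix (Fin 4) (Fin 4) ℝ) i i = 0 := fun i => by linarith [h i i]
  ext i j
  simp only [ofE, toE, LinearMap.coe_mk, AddHom.coe_mk, Matrix.sum_apply, Matrix.smul_apply,
    PiLp.toLp_apply, Fin.sum_univ_six, idx, bm, v6_0, v6_1, v6_2, v6_3, v6_4, v6_5]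
  fin_cases i <;> fin_cases j <;>
    simp [Matrix.add_apply, Matrix.smul_apply] <;>
    (try simp [Matrix.vecHead, Matrix.vecTail]) <;>
    linarith [h 0 1, h 0 2, h 0 3, h 1 2, h 1 3, h 2 3, hd 0, hd 1, hd 2, hd 3]

lemma toE_ofE (f : EuclideanSpace ℝ (Fin 6)) : toE (ofE f) = f := by
  ext k
  simp only [ofE, toE, LinearMap.coe_mk, AddHom.coe_mk, Matrix.sum_apply, Matrix.smul_apply,
    PiLp.toLp_apply, Fin.sum_univ_six, idx, bm, v6_0, v6_1, v6_2, v6_3, v6_4, v6_5]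
  fin_cases k <;> norm_num
  all_goals simp [Matrix.vecHead, Matrix.vecTail]

noncomputable def eE : so4 ≃ₗ[ℝ] EuclideanSpace ℝ (Fin 6) :=
  LinearEquiv.ofLinear toE ofE (LinearMap.ext toE_ofE) (LinearMap.ext ofE_toE)

lemma eE_apply (x : so4) : eE x = toE x := rfl

lemma tr0 (X Z : Matrix (Fin 4) (Fin 4) ℝ) : ((X * Z - Z * X) * Z).trace = 0 := by
  rw [Matrix.sub_mul, Matrix.trace_sub, Matrix.mul_assoc, Matrix.mul_assoc,
    Matrix.trace_mul_comm Z (X * Z), Matrix.mul_assoc]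
  exact sub_self _

lemma inner_toE (A B : so4) :
    (inner ℝ (toE A) (toE B) : ℝ) = -(1/2) * ((A : Matrix (Fin 4) (Fin 4) ℝ) * B).trace := by
  obtain ⟨A, hA⟩ := A
  obtain ⟨B, hB⟩ := B
  have ha := so4_skew hA
  have hb := so4_skew hB
  have da : ∀ i, A i i = 0 := fun i => by linarith [ha i i]
  have db : ∀ i, B i i = 0 := fun i => by linarith [hb i i]
  simp only [PiLp.inner_apply, RCLike.inner_apply, starRingEnd_apply, star_trivial, toE, PiLp.toLp_apply,
    LinearMap.coe_mk, AddHom.coe_mk, Fin.sum_univ_six, idx, v6_0, v6_1, v6_2, v6_3, v6_4, v6_5,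
    Matrix.trace, Matrix.diag_apply, Matrix.mul_apply, Fin.sum_univ_four]
  simp only [ha 0 1, ha 0 2, ha 0 3, ha 1 2, ha 1 3, ha 2 3,
    hb 0 1, hb 0 2, hb 0 3, hb 1 2, hb 1 3, hb 2 3, da, db]
  ring

lemma key_orth (X Z : so4) : (inner ℝ (toE ⁅X, Z⁆) (toE Z) : ℝ) = 0 := by
  rw [inner_toE]
  have h : (↑⁅X, Z⁆ : Matrix (Fin 4) (Fin 4) ℝ) =
      (X : Matrix (Fin 4) (Fin 4) ℝ) * (Z : Matrix (Fin 4) (Fin 4) ℝ) -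
      (Z : Matrix (Fin 4) (Fin 4) ℝ) * (X : Matrix (Fin 4) (Fin 4) ℝ) := by
    rw [LieSubalgebra.coe_bracket, Ring.lie_def]
  rw [h, tr0, mul_zero]

def sb (k : Fin 6) : so4 := ⟨bm k, bm_mem k⟩

lemma br0 : bm 3 * bm 1 - bm 1 * bm 3 = bm 0 := by
  ext i j
  fin_cases i <;> fin_cases j <;>
    norm_num [bm, Matrix.mul_apply, Matrix.sub_apply, Fin.sum_univ_four,
      v6_0, v6_1, v6_2, v6_3, v6_4, v6_5]

lemma br1 : bm 0 * bm 3 - bm 3 * bm 0 = bm 1 := by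
  ext i j
  fin_cases i <;> fin_cases j <;>
    norm_num [bm, Matrix.mul_apply, Matrix.sub_apply, Fin.sum_univ_four,
      v6_0, v6_1, v6_2, v6_3, v6_4, v6_5]

lemma br2 : bm 0 * bm 4 - bm 4 * bm 0 = bm 2 := by
  ext i j
  fin_cases i <;> fin_cases j <;>
    norm_num [bm, Matrix.mul_apply, Matrix.sub_apply, Fin.sum_univ_four,
      v6_0, v6_1, v6_2, v6_3, v6_4, v6_5]

lemma br3 : bm 1 * bm 0 - bm 0 * bm 1 = bm 3 := by
  ext i j
  fin_cases i <;> fin_cases j <;>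
    norm_num [bm, Matrix.mul_apply, Matrix.sub_apply, Fin.sum_univ_four,
      v6_0, v6_1, v6_2, v6_3, v6_4, v6_5]

lemma br4 : bm 3 * bm 5 - bm 5 * bm 3 = bm 4 := by
  ext i j
  fin_cases i <;> fin_cases j <;>
    norm_num [bm, Matrix.mul_apply, Matrix.sub_apply, Fin.sum_univ_four,
      v6_0, v6_1, v6_2, v6_3, v6_4, v6_5]

lemma br5 : bm 2 * bm 1 - bm 1 * bm 2 = bm 5 := by
  ext i j
  fin_cases i <;> fin_cases j <;>
    norm_num [bm, Matrix.mul_apply, Matrix.sub_apply, Fin.sum_univ_four,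
      v6_0, v6_1, v6_2, v6_3, v6_4, v6_5]

/-- every proper Lie subalgebra of `so(4)` has dimension at
most 4. -/
theorem stmt15 (𝔥 : LieSubalgebra ℝ (Matrix (Fin 4) (Fin 4) ℝ))
    (hsub : 𝔥 ≤ so4) (hne : 𝔥 ≠ so4) :
    Module.finrank ℝ 𝔥 ≤ 4 := by
  by_contra hlt
  push_neg at hlt
  have hsub' : 𝔥.toSubmodule ≤ so4.toSubmodule := hsub
  set K : Submodule ℝ so4 := 𝔥.toSubmodule.comap (so4.toSubmodule).subtype with hK
  have memH : ∀ t : so4, t ∈ K → (↑t : Matrix (Fin 4) (Fin 4) ℝ) ∈ 𝔥 := fun t ht => ht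
  have memK : ∀ t : so4, (↑t : Matrix (Fin 4) (Fin 4) ℝ) ∈ 𝔥 → t ∈ K := fun t ht => ht
  have hKr : Module.finrank ℝ K = Module.finrank ℝ 𝔥 :=
    (Submodule.comapSubtypeEquivOfLe hsub').finrank_eq
  have h6 : Module.finrank ℝ so4 = 6 := by
    rw [eE.finrank_eq]
    simp
  have hle : Module.finrank ℝ K ≤ 6 := h6 ▸ Submodule.finrank_le K
  have hKne : K ≠ ⊤ := by
    intro hKtop
    apply hne
    refine le_antisymm hsub fun A hA => ?_
    exact memH ⟨A, hA⟩ (hKtop ▸ Submodule.mem_top)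
  have hKn6 : Module.finrank ℝ K ≠ 6 :=
    fun h => hKne (Submodule.eq_top_of_finrank_eq (by rw [h, h6]))
  have hK5 : Module.finrank ℝ K = 5 := by omega
  set W : Submodule ℝ (EuclideanSpace ℝ (Fin 6)) := K.map eE.toLinearMap with hW
  have hWr : Module.finrank ℝ W = 5 := by
    rw [LinearEquiv.finrank_map_eq]
    exact hK5
  have h6E : Module.finrank ℝ (EuclideanSpace ℝ (Fin 6)) = 6 := by simp
  have hWo : Module.finrank ℝ Wᗮ = 1 := by
    have := W.finrank_add_finrank_orthogonal (𝕜 := ℝ)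
    omega
  have hWbot : Wᗮ ≠ ⊥ := fun h => by rw [h] at hWo; simp at hWo
  obtain ⟨z, hzW, hz0⟩ := (Submodule.ne_bot_iff _).mp hWbot
  set Z : so4 := eE.symm z with hZdef
  have heZ : eE Z = z := eE.apply_symm_apply z
  have hWle : W ≤ (ℝ ∙ z)ᗮ := by
    intro w hw
    rw [Submodule.mem_orthogonal]
    intro u hu
    obtain ⟨c, rfl⟩ := Submodule.mem_span_singleton.mp hu
    have h0 : (inner ℝ w z : ℝ) = 0 := (Submodule.mem_orthogonal W z).mp hzW w hw
    rw [real_inner_smul_left, real_inner_comm, h0, mul_zero]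
  have hspan : Module.finrank ℝ (ℝ ∙ z)ᗮ = 5 := by
    haveI : Fact (Module.finrank ℝ (EuclideanSpace ℝ (Fin 6)) = 5 + 1) := ⟨by simp⟩
    exact Submodule.finrank_orthogonal_span_singleton hz0
  have hWeq : W = (ℝ ∙ z)ᗮ := Submodule.eq_of_le_of_finrank_le hWle (by omega)
  have hbr : ∀ X : so4, ⁅X, Z⁆ ∈ K := by
    intro X
    have h2 : (inner ℝ (eE ⁅X, Z⁆) z : ℝ) = 0 := by
      rw [← heZ]
      exact key_orth X Z
    have h1 : eE ⁅X, Z⁆ ∈ (ℝ ∙ z)ᗮ := by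
      rw [Submodule.mem_orthogonal]
      intro u hu
      obtain ⟨c, rfl⟩ := Submodule.mem_span_singleton.mp hu
      rw [real_inner_smul_left, real_inner_comm, h2, mul_zero]
    rw [← hWeq, hW] at h1
    have := (Submodule.mem_map_equiv (p := K) (e := eE)).mp h1
    simpa using this
  have hZK : Z ∉ K := by
    intro hZK
    have hzmem : z ∈ W := ⟨Z, hZK, heZ⟩
    have h0 : (inner ℝ z z : ℝ) = 0 := (Submodule.mem_orthogonal W z).mp hzW z hzmem
    exact hz0 (inner_self_eq_zero.mp h0)
  have hsup : K ⊔ (ℝ ∙ Z) = ⊤ := by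
    have hlt2 : K < K ⊔ (ℝ ∙ Z) := by
      refine lt_of_le_of_ne le_sup_left fun hEq => hZK ?_
      rw [hEq]
      exact Submodule.mem_sup_right (Submodule.mem_span_singleton_self Z)
    have h1 := Submodule.finrank_lt_finrank_of_lt hlt2
    have h2 := Submodule.finrank_le (K ⊔ (ℝ ∙ Z))
    rw [h6] at h2
    apply Submodule.eq_top_of_finrank_eq
    rw [h6]
    omega
  have hbr2 : ∀ X Y : so4, ⁅X, Y⁆ ∈ K := by
    intro X Y
    have hX : X ∈ K ⊔ (ℝ ∙ Z) := hsup ▸ Submodule.mem_top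
    have hY : Y ∈ K ⊔ (ℝ ∙ Z) := hsup ▸ Submodule.mem_top
    obtain ⟨x1, hx1, s1, hs1, rfl⟩ := Submodule.mem_sup.mp hX
    obtain ⟨y1, hy1, s2, hs2, rfl⟩ := Submodule.mem_sup.mp hY
    obtain ⟨c, rfl⟩ := Submodule.mem_span_singleton.mp hs1
    obtain ⟨d, rfl⟩ := Submodule.mem_span_singleton.mp hs2
    have m1 : ⁅x1, y1⁆ ∈ K := by
      apply memK
      rw [LieSubalgebra.coe_bracket]
      exact 𝔥.lie_mem (memH x1 hx1) (memH y1 hy1)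
    have m2 : ⁅x1, Z⁆ ∈ K := hbr x1
    have m3 : ⁅y1, Z⁆ ∈ K := hbr y1
    have hexp : ⁅x1 + c • Z, y1 + d • Z⁆ =
        ⁅x1, y1⁆ + d • ⁅x1, Z⁆ + (-c) • ⁅y1, Z⁆ := by
      rw [lie_add, add_lie, add_lie, lie_smul, lie_smul, smul_lie, smul_lie, lie_self,
        smul_zero, smul_zero, ← lie_skew y1 Z]
      simp only [smul_neg, neg_smul]
      abel
    rw [hexp]
    exact K.add_mem (K.add_mem m1 (K.smul_mem d m2)) (K.smul_mem (-c) m3)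
  have h0 : bm 0 ∈ 𝔥 := by
    have hm := memH _ (hbr2 (sb 3) (sb 1))
    rwa [LieSubalgebra.coe_bracket, Ring.lie_def,
      show ((sb 3 : so4) : Matrix (Fin 4) (Fin 4) ℝ) = bm 3 from rfl,
      show ((sb 1 : so4) : Matrix (Fin 4) (Fin 4) ℝ) = bm 1 from rfl, br0] at hm
  have h1 : bm 1 ∈ 𝔥 := by
    have hm := memH _ (hbr2 (sb 0) (sb 3))
    rwa [LieSubalgebra.coe_bracket, Ring.lie_def,
      show ((sb 0 : so4) : Matrix (Fin 4) (Fin 4) ℝ) = bm 0 from rfl,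
      show ((sb 3 : so4) : Matrix (Fin 4) (Fin 4) ℝ) = bm 3 from rfl, br1] at hm
  have h2 : bm 2 ∈ 𝔥 := by
    have hm := memH _ (hbr2 (sb 0) (sb 4))
    rwa [LieSubalgebra.coe_bracket, Ring.lie_def,
      show ((sb 0 : so4) : Matrix (Fin 4) (Fin 4) ℝ) = bm 0 from rfl,
      show ((sb 4 : so4) : Matrix (Fin 4) (Fin 4) ℝ) = bm 4 from rfl, br2] at hm
  have h3 : bm 3 ∈ 𝔥 := by
    have hm := memH _ (hbr2 (sb 1) (sb 0))
    rwa [LieSubalgebra.coe_bracket, Ring.lie_def,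
      show ((sb 1 : so4) : Matrix (Fin 4) (Fin 4) ℝ) = bm 1 from rfl,
      show ((sb 0 : so4) : Matrix (Fin 4) (Fin 4) ℝ) = bm 0 from rfl, br3] at hm
  have h4 : bm 4 ∈ 𝔥 := by
    have hm := memH _ (hbr2 (sb 3) (sb 5))
    rwa [LieSubalgebra.coe_bracket, Ring.lie_def,
      show ((sb 3 : so4) : Matrix (Fin 4) (Fin 4) ℝ) = bm 3 from rfl,
      show ((sb 5 : so4) : Matrix (Fin 4) (Fin 4) ℝ) = bm 5 from rfl, br4] at hm
  have h5 : bm 5 ∈ 𝔥 := by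
    have hm := memH _ (hbr2 (sb 2) (sb 1))
    rwa [LieSubalgebra.coe_bracket, Ring.lie_def,
      show ((sb 2 : so4) : Matrix (Fin 4) (Fin 4) ℝ) = bm 2 from rfl,
      show ((sb 1 : so4) : Matrix (Fin 4) (Fin 4) ℝ) = bm 1 from rfl, br5] at hm
  have hbm : ∀ k : Fin 6, bm k ∈ 𝔥 := by
    intro k
    fin_cases k
    exacts [h0, h1, h2, h3, h4, h5]
  apply hne
  refine le_antisymm hsub fun A hA => ?_
  have hrep := congrArg Subtype.val (ofE_toE ⟨A, hA⟩)
  have hval : (ofE (toE ⟨A, hA⟩)).1 = ∑ k, toE ⟨A, hA⟩ k • bm k := rfl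
  rw [hval] at hrep
  have hsum : (∑ k, toE ⟨A, hA⟩ k • bm k) ∈ 𝔥.toSubmodule :=
    Submodule.sum_mem _ fun k _ => Submodule.smul_mem _ _ (hbm k)
  rw [hrep] at hsum
  exact hsum
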